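/- Let B be a unital C*-algebra, A a norm-closed unital subalgebra of B containing the unit of B, and p a projection in B** that is open in B**. Let C = pB**p ∩ B and D = A ∩ C. If p is open in A** (i.e. p ∈ (pA**p ∩ A)^⊥⊥), then M(C:D) equals the closure of D inside M(C) with respect to the strict topology β_C. -/

import Mathlib

set_option linter.unusedSectionVars false

/- Common definitions: bidual of a (C*-)algebra, Arens product, annihilators,
open/closed projections, multiplier algebras, strict topology, etc. -/

noncomputable section

open Filter Topology ComplexConjugate Pointwise

namespace OAPaper

variable {B : Type} [NonUnitalNormedRing B]
  [NormedSpace ℂ B] [IsScalarTower ℂ B B] [SMulCommClass ℂ B B]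

/-- The dual space `B*`. -/
abbrev Dl (B : Type) [NonUnitalNormedRing B] [NormedSpace ℂ B] : Type :=
  StrongDual ℂ B

/-- The bidual `B**`. -/
abbrev Bidual (B : Type) [NonUnitalNormedRing B] [NormedSpace ℂ B] : Type :=
  StrongDual ℂ (StrongDual ℂ B)

/-- The canonical embedding of `B` into its bidual. -/
def jj : B →L[ℂ] Bidual B := NormedSpace.inclusionInDoubleDual ℂ B

lemma norm_jj_apply_le (b : B) : ‖jj b‖ ≤ ‖b‖ := by
  exact NormedSpace.double_dual_bound ℂ B b

/-- `fA f a = f(a·)`. -/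
def fA (f : Dl B) (a : B) : Dl B := f.comp (ContinuousLinearMap.mul ℂ B a)

@[simp] lemma fA_apply (f : Dl B) (a b : B) : fA f a b = f (a * b) := rfl

lemma fA_norm_le (f : Dl B) (a : B) : ‖fA f a‖ ≤ ‖f‖ * ‖a‖ :=
  ContinuousLinearMap.opNorm_le_bound _ (by positivity) fun b => by
    calc ‖f (a * b)‖ ≤ ‖f‖ * ‖a * b‖ := f.le_opNorm _
    _ ≤ ‖f‖ * (‖a‖ * ‖b‖) := by gcongr; exact norm_mul_le a b
    _ = ‖f‖ * ‖a‖ * ‖b‖ := (mul_assoc _ _ _).symm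

lemma fA_add_left (f g : Dl B) (a : B) : fA (f + g) a = fA f a + fA g a := by
  ext b; simp [fA]

lemma fA_smul_left (c : ℂ) (f : Dl B) (a : B) : fA (c • f) a = c • fA f a := by
  ext b; simp [fA]

/-- `nF n f = n(f(a·))` as a functional of `a`. -/
def nF (n : Bidual B) (f : Dl B) : Dl B :=
  LinearMap.mkContinuous
    { toFun := fun a => n (fA f a)
      map_add' := fun a b => by
        have h : fA f (a + b) = fA f a + fA f b := by ext c; simp [add_mul]
        (try dsimp only); rw [h, map_add]
      map_smul' := fun c a => by
        have h : fA f (c • a) = c • fA f a := by ext d; simp [smul_mul_assoc]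
        (try dsimp only); rw [h, ContinuousLinearMap.map_smul]; simp }
    (‖n‖ * ‖f‖)
    (fun a => by
      calc ‖n (fA f a)‖ ≤ ‖n‖ * ‖fA f a‖ := n.le_opNorm _
      _ ≤ ‖n‖ * (‖f‖ * ‖a‖) := by gcongr; exact fA_norm_le f a
      _ = ‖n‖ * ‖f‖ * ‖a‖ := (mul_assoc _ _ _).symm)

@[simp] lemma nF_apply (n : Bidual B) (f : Dl B) (a : B) : nF n f a = n (fA f a) := rfl

lemma nF_norm_le (n : Bidual B) (f : Dl B) : ‖nF n f‖ ≤ ‖n‖ * ‖f‖ :=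
  LinearMap.mkContinuous_norm_le _ (by positivity) _

lemma nF_add_right (n : Bidual B) (f g : Dl B) : nF n (f + g) = nF n f + nF n g := by
  ext a; simp [fA_add_left]

lemma nF_smul_right (n : Bidual B) (c : ℂ) (f : Dl B) : nF n (c • f) = c • nF n f := by
  ext a; simp [fA_smul_left]

lemma nF_add_left (m n : Bidual B) (f : Dl B) : nF (m + n) f = nF m f + nF n f := by
  ext a; simp

lemma nF_smul_left (c : ℂ) (n : Bidual B) (f : Dl B) : nF (c • n) f = c • nF n f := by
  ext a; simp

lemma nF_zero_left (f : Dl B) : nF (0 : Bidual B) f = 0 := by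
  ext a; simp

/-- The (first) Arens product on the bidual `B**`. -/
def arens (m n : Bidual B) : Bidual B :=
  LinearMap.mkContinuous
    { toFun := fun f => m (nF n f)
      map_add' := fun f g => by (try dsimp only); rw [nF_add_right, map_add]
      map_smul' := fun c f => by
        (try dsimp only); rw [nF_smul_right, ContinuousLinearMap.map_smul]; simp }
    (‖m‖ * ‖n‖)
    (fun f => by
      calc ‖m (nF n f)‖ ≤ ‖m‖ * ‖nF n f‖ := m.le_opNorm _
      _ ≤ ‖m‖ * (‖n‖ * ‖f‖) := by gcongr; exact nF_norm_le n f
      _ = ‖m‖ * ‖n‖ * ‖f‖ := (mul_assoc _ _ _).symm)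

@[simp] lemma arens_apply (m n : Bidual B) (f : Dl B) : arens m n f = m (nF n f) := rfl

lemma arens_norm_le (m n : Bidual B) : ‖arens m n‖ ≤ ‖m‖ * ‖n‖ :=
  LinearMap.mkContinuous_norm_le _ (by positivity) _

lemma arens_add_left (m₁ m₂ n : Bidual B) :
    arens (m₁ + m₂) n = arens m₁ n + arens m₂ n := by ext f; simp

lemma arens_smul_left (c : ℂ) (m n : Bidual B) :
    arens (c • m) n = c • arens m n := by ext f; simp

lemma arens_add_right (m n₁ n₂ : Bidual B) :
    arens m (n₁ + n₂) = arens m n₁ + arens m n₂ := by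
  ext f; simp [nF_add_left]

lemma arens_smul_right (c : ℂ) (m n : Bidual B) :
    arens m (c • n) = c • arens m n := by
  ext f; simp [nF_smul_left]

lemma arens_zero_left (n : Bidual B) : arens (0 : Bidual B) n = 0 := by ext f; simp

lemma arens_zero_right (m : Bidual B) : arens m (0 : Bidual B) = 0 := by
  ext f; simp [nF_zero_left]

section StarPart

variable [StarRing B] [CStarRing B] [StarModule ℂ B]

/-- The adjoint of a functional: `(dstar f)(a) = conj (f (a*))`. -/
def dstar (f : Dl B) : Dl B :=
  LinearMap.mkContinuous
    { toFun := fun a => conj (f (star a))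
      map_add' := fun a b => by simp [star_add]
      map_smul' := fun c a => by
        simp [star_smul, Complex.star_def, smul_eq_mul, map_mul] }
    ‖f‖
    (fun a => by
      calc ‖conj (f (star a))‖ = ‖f (star a)‖ := RCLike.norm_conj _
      _ ≤ ‖f‖ * ‖star a‖ := f.le_opNorm _
      _ = ‖f‖ * ‖a‖ := by rw [norm_star])

@[simp] lemma dstar_apply (f : Dl B) (a : B) : dstar f a = conj (f (star a)) := rfl

lemma dstar_norm_le (f : Dl B) : ‖dstar f‖ ≤ ‖f‖ :=
  LinearMap.mkContinuous_norm_le _ (norm_nonneg f) _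

lemma dstar_add (f g : Dl B) : dstar (f + g) = dstar f + dstar g := by
  ext a; simp

lemma dstar_smul (c : ℂ) (f : Dl B) : dstar (c • f) = conj c • dstar f := by
  ext a; simp [smul_eq_mul, map_mul]

/-- The involution on the bidual: `(bstar m)(f) = conj (m (dstar f))`. -/
def bstar (m : Bidual B) : Bidual B :=
  LinearMap.mkContinuous
    { toFun := fun f => conj (m (dstar f))
      map_add' := fun f g => by (try dsimp only); rw [dstar_add, map_add]; simp
      map_smul' := fun c f => by
        (try dsimp only); rw [dstar_smul, ContinuousLinearMap.map_smul]
        simp [smul_eq_mul, map_mul] }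
    ‖m‖
    (fun f => by
      calc ‖conj (m (dstar f))‖ = ‖m (dstar f)‖ := RCLike.norm_conj _
      _ ≤ ‖m‖ * ‖dstar f‖ := m.le_opNorm _
      _ ≤ ‖m‖ * ‖f‖ := by gcongr; exact dstar_norm_le f)

@[simp] lemma bstar_apply (m : Bidual B) (f : Dl B) : bstar m f = conj (m (dstar f)) := rfl

/-- A projection in the bidual: a self-adjoint idempotent for the Arens product. -/
def IsProjE (p : Bidual B) : Prop := arens p p = p ∧ bstar p = p

end StarPart

/-- The annihilator `S^⊥ ⊆ B*` of a set `S ⊆ B`. -/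
def ann (S : Set B) : Set (Dl B) := {f | ∀ a ∈ S, f a = 0}

/-- The bi-annihilator `S^⊥⊥ ⊆ B**` of a set `S ⊆ B`. -/
def biann (S : Set B) : Set (Bidual B) := {m | ∀ f ∈ ann S, m f = 0}

/-- The pre-annihilator `S_⊥ ⊆ B*` of a set `S ⊆ B**`. -/
def preAnn (S : Set (Bidual B)) : Set (Dl B) := {f | ∀ m ∈ S, m f = 0}

/-- Image of a subset of `B` in the bidual. -/
def jset (S : Set B) : Set (Bidual B) := (fun b : B => jj b) '' S

/-- `p` is an open projection in `B**`: `p` is a projection which is the weak* limit of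
an increasing net of positive elements of `B`. -/
def IsOpenP [StarRing B] [CStarRing B] [StarModule ℂ B] [PartialOrder B]
    [StarOrderedRing B] (p : Bidual B) : Prop :=
  IsProjE p ∧
    ∃ (ι : Type) (pr : Preorder ι), Nonempty ι ∧
      (∀ i k : ι, ∃ l : ι, pr.le i l ∧ pr.le k l) ∧
      ∃ e : ι → B, (∀ i k : ι, pr.le i k → e i ≤ e k) ∧ (∀ i, 0 ≤ e i) ∧
        ∀ f : Dl B, Tendsto (fun i => jj (e i) f) (@atTop ι pr) (𝓝 (p f))

/-- `D` possesses a contractive approximate identity. -/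
def HasCAI (D : Set B) : Prop :=
  ∃ (ι : Type) (pr : Preorder ι), Nonempty ι ∧
    (∀ i k : ι, ∃ l : ι, pr.le i l ∧ pr.le k l) ∧
    ∃ e : ι → B, (∀ i, e i ∈ D ∧ ‖e i‖ ≤ 1) ∧
      ∀ x ∈ D, Tendsto (fun i => e i * x) (@atTop ι pr) (𝓝 x) ∧
        Tendsto (fun i => x * e i) (@atTop ι pr) (𝓝 x)

/-- `D` possesses an approximate identity (bounded or unbounded) which is also an
approximate identity for `C`. -/
def HasJointAI (D C : Set B) : Prop :=
  ∃ (ι : Type) (pr : Preorder ι), Nonempty ι ∧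
    (∀ i k : ι, ∃ l : ι, pr.le i l ∧ pr.le k l) ∧
    ∃ e : ι → B, (∀ i, e i ∈ D) ∧
      (∀ x ∈ D, Tendsto (fun i => e i * x) (@atTop ι pr) (𝓝 x) ∧
        Tendsto (fun i => x * e i) (@atTop ι pr) (𝓝 x)) ∧
      (∀ x ∈ C, Tendsto (fun i => e i * x) (@atTop ι pr) (𝓝 x) ∧
        Tendsto (fun i => x * e i) (@atTop ι pr) (𝓝 x))

/-- Membership in the closure of `S ⊆ B**` with respect to the strict topology `β_C`
determined by `C ⊆ B`, i.e. the locally convex topology generated by the seminorms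
`η ↦ ‖ηb‖ + ‖cη‖` for `b, c ∈ C`:  every basic `β_C`-neighborhood of `x` meets `S`. -/
def inStrictClosure (C : Set B) (S : Set (Bidual B)) (x : Bidual B) : Prop :=
  ∀ F : Finset (B × B), (∀ bc ∈ F, bc.1 ∈ C ∧ bc.2 ∈ C) → ∀ ε : ℝ, 0 < ε →
    ∃ s ∈ S, ∀ bc ∈ F,
      ‖arens (x - s) (jj bc.1)‖ + ‖arens (jj bc.2) (x - s)‖ < ε

/-- The multiplier algebra `M(C) = {η ∈ C** : ηC ⊆ C and Cη ⊆ C}`, realized inside `B**`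
(identifying `C**` with the bi-annihilator `C^⊥⊥` of `C` in `B**`). -/
def mult (C : Set B) : Set (Bidual B) :=
  {η | η ∈ biann C ∧ (∀ c ∈ C, ∃ c' ∈ C, arens η (jj c) = jj c') ∧
    (∀ c ∈ C, ∃ c' ∈ C, arens (jj c) η = jj c')}

/-- `M(C : D) = {η ∈ M(C) : ηD ⊆ D and Dη ⊆ D}`. -/
def multRel (C D : Set B) : Set (Bidual B) :=
  {η | η ∈ mult C ∧ (∀ d ∈ D, ∃ d' ∈ D, arens η (jj d) = jj d') ∧
    (∀ d ∈ D, ∃ d' ∈ D, arens (jj d) η = jj d')}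

/-- `pB**p ∩ B`, the hereditary subalgebra of `B` supported by `p`, as a subset of `B`. -/
def herB (p : Bidual B) : Set B :=
  {b : B | ∃ m : Bidual B, arens (arens p m) p = jj b}

/-- `pA**p ∩ A`, where `A**` is identified with `A^⊥⊥ ⊆ B**`, as a subset of `B`. -/
def herSub (A : Set B) (p : Bidual B) : Set B :=
  {a : B | a ∈ A ∧ ∃ m ∈ biann A, arens (arens p m) p = jj a}

/-- `p` is open in `A**`: `p` is a projection with `p ∈ (pA**p ∩ A)^⊥⊥`. -/
def IsOpenIn [StarRing B] [CStarRing B] [StarModule ℂ B] (A : Set B) (p : Bidual B) : Prop :=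
  IsProjE p ∧ p ∈ biann (herSub A p)

/-- The functional `μq : x ↦ μ(qx)` (products taken in `B**`). -/
def fmulQ (μ : Dl B) (q : Bidual B) : Dl B :=
  LinearMap.mkContinuous
    { toFun := fun x => arens q (jj x) μ
      map_add' := fun x y => by (try dsimp only); rw [map_add, arens_add_right]; simp
      map_smul' := fun c x => by
        (try dsimp only); rw [ContinuousLinearMap.map_smul, arens_smul_right]; simp }
    (‖q‖ * ‖μ‖)
    (fun x => by
      calc ‖arens q (jj x) μ‖ ≤ ‖arens q (jj x)‖ * ‖μ‖ := (arens q (jj x)).le_opNorm _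
      _ ≤ (‖q‖ * ‖jj x‖) * ‖μ‖ := by gcongr; exact arens_norm_le _ _
      _ ≤ (‖q‖ * ‖x‖) * ‖μ‖ := by gcongr; exact norm_jj_apply_le x
      _ = ‖q‖ * ‖μ‖ * ‖x‖ := by ring)

@[simp] lemma fmulQ_apply (μ : Dl B) (q : Bidual B) (x : B) :
    fmulQ μ q x = arens q (jj x) μ := rfl

/-- The functional `qμ : x ↦ μ(xq)` (products taken in `B**`). -/
def qmulF (q : Bidual B) (μ : Dl B) : Dl B :=
  LinearMap.mkContinuous
    { toFun := fun x => arens (jj x) q μ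
      map_add' := fun x y => by (try dsimp only); rw [map_add, arens_add_left]; simp
      map_smul' := fun c x => by
        (try dsimp only); rw [ContinuousLinearMap.map_smul, arens_smul_left]; simp }
    (‖q‖ * ‖μ‖)
    (fun x => by
      calc ‖arens (jj x) q μ‖ ≤ ‖arens (jj x) q‖ * ‖μ‖ := (arens (jj x) q).le_opNorm _
      _ ≤ (‖jj x‖ * ‖q‖) * ‖μ‖ := by gcongr; exact arens_norm_le _ _
      _ ≤ (‖x‖ * ‖q‖) * ‖μ‖ := by gcongr; exact norm_jj_apply_le x
      _ = ‖q‖ * ‖μ‖ * ‖x‖ := by ring)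

@[simp] lemma qmulF_apply (q : Bidual B) (μ : Dl B) (x : B) :
    qmulF q μ x = arens (jj x) q μ := rfl

/-- The functional `qμq : x ↦ μ(qxq)` (products taken in `B**`). -/
def sandQ (q : Bidual B) (μ : Dl B) : Dl B :=
  LinearMap.mkContinuous
    { toFun := fun x => arens (arens q (jj x)) q μ
      map_add' := fun x y => by
        (try dsimp only); rw [map_add, arens_add_right, arens_add_left]; simp
      map_smul' := fun c x => by
        (try dsimp only); rw [ContinuousLinearMap.map_smul, arens_smul_right, arens_smul_left]; simp }
    (‖q‖ * ‖q‖ * ‖μ‖)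
    (fun x => by
      calc ‖arens (arens q (jj x)) q μ‖ ≤ ‖arens (arens q (jj x)) q‖ * ‖μ‖ :=
        (arens (arens q (jj x)) q).le_opNorm _
      _ ≤ (‖arens q (jj x)‖ * ‖q‖) * ‖μ‖ := by gcongr; exact arens_norm_le _ _
      _ ≤ ((‖q‖ * ‖jj x‖) * ‖q‖) * ‖μ‖ := by gcongr; exact arens_norm_le _ _
      _ ≤ ((‖q‖ * ‖x‖) * ‖q‖) * ‖μ‖ := by gcongr; exact norm_jj_apply_le x
      _ = ‖q‖ * ‖q‖ * ‖μ‖ * ‖x‖ := by ring)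

@[simp] lemma sandQ_apply (q : Bidual B) (μ : Dl B) (x : B) :
    sandQ q μ x = arens (arens q (jj x)) q μ := rfl

/-- The subspace `qB = {qb : b ∈ B} ⊆ B**`. -/
def qBmod (q : Bidual B) : Submodule ℂ (Bidual B) where
  carrier := Set.range fun b : B => arens q (jj b)
  add_mem' := by
    rintro _ _ ⟨x, rfl⟩ ⟨y, rfl⟩
    exact ⟨x + y, by (try dsimp only); rw [map_add, arens_add_right]⟩
  zero_mem' := ⟨0, by (try dsimp only); rw [map_zero, arens_zero_right]⟩
  smul_mem' := by
    rintro c _ ⟨x, rfl⟩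
    exact ⟨c • x, by (try dsimp only); rw [ContinuousLinearMap.map_smul, arens_smul_right]⟩

/-- The subspace `Bq = {bq : b ∈ B} ⊆ B**`. -/
def Bqmod (q : Bidual B) : Submodule ℂ (Bidual B) where
  carrier := Set.range fun b : B => arens (jj b) q
  add_mem' := by
    rintro _ _ ⟨x, rfl⟩ ⟨y, rfl⟩
    exact ⟨x + y, by (try dsimp only); rw [map_add, arens_add_left]⟩
  zero_mem' := ⟨0, by (try dsimp only); rw [map_zero, arens_zero_left]⟩
  smul_mem' := by
    rintro c _ ⟨x, rfl⟩
    exact ⟨c • x, by (try dsimp only); rw [ContinuousLinearMap.map_smul, arens_smul_left]⟩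

instance (q : Bidual B) : SeminormedAddCommGroup (qBmod q) :=
  @Submodule.seminormedAddCommGroup ℂ (Bidual B) _ _ _ (qBmod q)

instance (q : Bidual B) : NormedSpace ℂ (qBmod q) :=
  @Submodule.normedSpace ℂ ℂ _ _ _ (Bidual B) _ _ _ _ (qBmod q)

instance (q : Bidual B) : SeminormedAddCommGroup (Bqmod q) :=
  @Submodule.seminormedAddCommGroup ℂ (Bidual B) _ _ _ (Bqmod q)

instance (q : Bidual B) : NormedSpace ℂ (Bqmod q) :=
  @Submodule.normedSpace ℂ ℂ _ _ _ (Bidual B) _ _ _ _ (Bqmod q)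

/-- For `φ ∈ (qB)*`, the functional `φq ∈ B*` given by `x ↦ φ(qx)`. -/
def phiQ (q : Bidual B) (φ : StrongDual ℂ (qBmod q)) : Dl B :=
  LinearMap.mkContinuous
    { toFun := fun x => φ ⟨arens q (jj x), ⟨x, rfl⟩⟩
      map_add' := fun x y => by
        have h : (⟨arens q (jj (x + y)), ⟨x + y, rfl⟩⟩ : qBmod q)
            = ⟨arens q (jj x), ⟨x, rfl⟩⟩ + ⟨arens q (jj y), ⟨y, rfl⟩⟩ := by
          apply Subtype.ext
          simp [map_add, arens_add_right]
        (try dsimp only); rw [h, map_add]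
      map_smul' := fun c x => by
        have h : (⟨arens q (jj (c • x)), ⟨c • x, rfl⟩⟩ : qBmod q)
            = c • ⟨arens q (jj x), ⟨x, rfl⟩⟩ := by
          apply Subtype.ext
          simp [arens_smul_right]
        (try dsimp only); rw [h, map_smul]; simp }
    (‖φ‖ * ‖q‖)
    (fun x => by
      calc ‖φ ⟨arens q (jj x), ⟨x, rfl⟩⟩‖
          ≤ ‖φ‖ * ‖(⟨arens q (jj x), ⟨x, rfl⟩⟩ : qBmod q)‖ := φ.le_opNorm _
      _ = ‖φ‖ * ‖arens q (jj x)‖ := rfl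
      _ ≤ ‖φ‖ * (‖q‖ * ‖jj x‖) := by gcongr; exact arens_norm_le _ _
      _ ≤ ‖φ‖ * (‖q‖ * ‖x‖) := by gcongr; exact norm_jj_apply_le x
      _ = ‖φ‖ * ‖q‖ * ‖x‖ := by ring)

@[simp] lemma phiQ_apply (q : Bidual B) (φ : StrongDual ℂ (qBmod q)) (x : B) :
    phiQ q φ x = φ ⟨arens q (jj x), ⟨x, rfl⟩⟩ := rfl

/-- For `φ ∈ (Bq)*`, the functional `qφ ∈ B*` given by `x ↦ φ(xq)`. -/
def qPhi (q : Bidual B) (φ : StrongDual ℂ (Bqmod q)) : Dl B :=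
  LinearMap.mkContinuous
    { toFun := fun x => φ ⟨arens (jj x) q, ⟨x, rfl⟩⟩
      map_add' := fun x y => by
        have h : (⟨arens (jj (x + y)) q, ⟨x + y, rfl⟩⟩ : Bqmod q)
            = ⟨arens (jj x) q, ⟨x, rfl⟩⟩ + ⟨arens (jj y) q, ⟨y, rfl⟩⟩ := by
          apply Subtype.ext
          simp [map_add, arens_add_left]
        (try dsimp only); rw [h, map_add]
      map_smul' := fun c x => by
        have h : (⟨arens (jj (c • x)) q, ⟨c • x, rfl⟩⟩ : Bqmod q)
            = c • ⟨arens (jj x) q, ⟨x, rfl⟩⟩ := by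
          apply Subtype.ext
          simp [arens_smul_left]
        (try dsimp only); rw [h, map_smul]; simp }
    (‖φ‖ * ‖q‖)
    (fun x => by
      calc ‖φ ⟨arens (jj x) q, ⟨x, rfl⟩⟩‖
          ≤ ‖φ‖ * ‖(⟨arens (jj x) q, ⟨x, rfl⟩⟩ : Bqmod q)‖ := φ.le_opNorm _
      _ = ‖φ‖ * ‖arens (jj x) q‖ := rfl
      _ ≤ ‖φ‖ * (‖jj x‖ * ‖q‖) := by gcongr; exact arens_norm_le _ _
      _ ≤ ‖φ‖ * (‖x‖ * ‖q‖) := by gcongr; exact norm_jj_apply_le x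
      _ = ‖φ‖ * ‖q‖ * ‖x‖ := by ring)

@[simp] lemma qPhi_apply (q : Bidual B) (φ : StrongDual ℂ (Bqmod q)) (x : B) :
    qPhi q φ x = φ ⟨arens (jj x) q, ⟨x, rfl⟩⟩ := rfl

/-- For `ψ ∈ B*`, the element `ψq` of `(qB)*` given by `qb ↦ ψ(qb)` (canonical pairing of
`B**` with `B*`). -/
def pairRestrict (q : Bidual B) (ψ : Dl B) : StrongDual ℂ (qBmod q) :=
  LinearMap.mkContinuous
    { toFun := fun m => (m : Bidual B) ψ
      map_add' := fun m n => by simp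
      map_smul' := fun c m => by simp }
    ‖ψ‖
    (fun m => by
      calc ‖(m : Bidual B) ψ‖ ≤ ‖(m : Bidual B)‖ * ‖ψ‖ := (m : Bidual B).le_opNorm _
      _ = ‖ψ‖ * ‖m‖ := by rw [mul_comm]; rfl)

/-- Membership in the weak*-closure of a subset of `B**` (the `σ(B**, B*)`-topology). -/
def memWeakStarClosure (S : Set (Bidual B)) (m : Bidual B) : Prop :=
  StrongDual.toWeakDual m ∈ closure (⇑(StrongDual.toWeakDual) '' S)

/-- A subset of `B*` is weak*-closed (for the `σ(B*, B)`-topology). -/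
def IsWeakStarClosed (S : Set (Dl B)) : Prop :=
  IsClosed (⇑(StrongDual.toWeakDual) '' S : Set (WeakDual ℂ B))

/-- `M(C)` (for `C` the whole algebra) as a submodule of the bidual. -/
def multSub (B : Type) [NonUnitalNormedRing B]
    [NormedSpace ℂ B] [IsScalarTower ℂ B B] [SMulCommClass ℂ B B] :
    Submodule ℂ (Bidual B) where
  carrier := mult (Set.univ : Set B)
  add_mem' := by
    rintro η₁ η₂ ⟨h1, h2, h3⟩ ⟨h1', h2', h3'⟩
    refine ⟨fun f hf => ?_, fun c hc => ?_, fun c hc => ?_⟩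
    · simp [h1 f hf, h1' f hf]
    · obtain ⟨c₁, -, hc₁⟩ := h2 c hc
      obtain ⟨c₂, -, hc₂⟩ := h2' c hc
      exact ⟨c₁ + c₂, trivial, by rw [arens_add_left, hc₁, hc₂, map_add]⟩
    · obtain ⟨c₁, -, hc₁⟩ := h3 c hc
      obtain ⟨c₂, -, hc₂⟩ := h3' c hc
      exact ⟨c₁ + c₂, trivial, by rw [arens_add_right, hc₁, hc₂, map_add]⟩
  zero_mem' := by
    refine ⟨fun f _ => rfl, fun c _ => ⟨0, trivial, by rw [arens_zero_left, map_zero]⟩,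
      fun c _ => ⟨0, trivial, by rw [arens_zero_right, map_zero]⟩⟩
  smul_mem' := by
    rintro s η ⟨h1, h2, h3⟩
    refine ⟨fun f hf => ?_, fun c hc => ?_, fun c hc => ?_⟩
    · simp [h1 f hf]
    · obtain ⟨c₁, -, hc₁⟩ := h2 c hc
      exact ⟨s • c₁, trivial, by rw [arens_smul_left, hc₁, ContinuousLinearMap.map_smul]⟩
    · obtain ⟨c₁, -, hc₁⟩ := h3 c hc
      exact ⟨s • c₁, trivial, by rw [arens_smul_right, hc₁, ContinuousLinearMap.map_smul]⟩

/-- The transpose (dual map) of a continuous linear map. -/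
def dualL {E F : Type} [NormedAddCommGroup E] [NormedSpace ℂ E]
    [NormedAddCommGroup F] [NormedSpace ℂ F] (T : E →L[ℂ] F) :
    StrongDual ℂ F →L[ℂ] StrongDual ℂ E :=
  (ContinuousLinearMap.compL ℂ E F ℂ).flip T

section Unital

variable {B : Type} [NormedRing B] [StarRing B] [CStarRing B] [NormedAlgebra ℂ B]
  [StarModule ℂ B] [PartialOrder B] [StarOrderedRing B]

/-- `q` is a closed projection in `B**`: `q` is a projection and `1 - q` is open. -/
def IsClosedP (q : Bidual B) : Prop :=
  IsProjE q ∧ IsOpenP (jj (1 : B) - q)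

end Unital


section Statements

variable {B : Type} [NormedRing B] [StarRing B] [CStarRing B] [NormedAlgebra ℂ B]
  [StarModule ℂ B] [CompleteSpace B] [PartialOrder B] [StarOrderedRing B]

@[simp] lemma jj_apply (b : B) (f : Dl B) : jj b f = f b := rfl

lemma norm_jj (b : B) : ‖jj b‖ = ‖b‖ :=
  (NormedSpace.inclusionInDoubleDualLi ℂ (E := B)).norm_map b

lemma fA_fA (f : Dl B) (a b : B) : fA (fA f a) b = fA f (a * b) := by
  ext c; simp [mul_assoc]

lemma nF_fA (k : Bidual B) (f : Dl B) (a : B) : nF k (fA f a) = fA (nF k f) a := by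
  ext b
  show k (fA (fA f a) b) = nF k f (a * b)
  rw [fA_fA]; rfl

lemma nF_nF (n k : Bidual B) (f : Dl B) : nF n (nF k f) = nF (arens n k) f := by
  ext a
  show n (fA (nF k f) a) = arens n k (fA f a)
  rw [arens_apply, nF_fA]

lemma arens_assoc (m n k : Bidual B) : arens (arens m n) k = arens m (arens n k) := by
  ext f
  show arens m n (nF k f) = m (nF (arens n k) f)
  rw [arens_apply, nF_nF]

lemma jj_mul (a b : B) : arens (jj a) (jj b) = jj (a * b) := by
  ext f; rfl

lemma arens_sub_left (m₁ m₂ n : Bidual B) : arens (m₁ - m₂) n = arens m₁ n - arens m₂ n := by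
  ext f; simp

lemma arens_sub_right (m n₁ n₂ : Bidual B) : arens m (n₁ - n₂) = arens m n₁ - arens m n₂ := by
  ext f
  have h : nF (n₁ - n₂) f = nF n₁ f - nF n₂ f := by ext a; simp
  simp [h]

/-- `m ↦ arens m n` as a continuous linear map. -/
def arensRightL (n : Bidual B) : Bidual B →L[ℂ] Bidual B :=
  LinearMap.mkContinuous
    { toFun := fun m => arens m n
      map_add' := fun m₁ m₂ => arens_add_left m₁ m₂ n
      map_smul' := fun c m => arens_smul_left c m n }
    ‖n‖ (fun m => by rw [mul_comm]; exact arens_norm_le m n)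

/-- `n ↦ arens m n` as a continuous linear map. -/
def arensLeftL (m : Bidual B) : Bidual B →L[ℂ] Bidual B :=
  LinearMap.mkContinuous
    { toFun := fun n => arens m n
      map_add' := fun n₁ n₂ => arens_add_right m n₁ n₂
      map_smul' := fun c n => by ext f; simp [nF_smul_left] }
    ‖m‖ (fun n => arens_norm_le m n)

@[simp] lemma arensRightL_apply (n m : Bidual B) : arensRightL n m = arens m n := rfl
@[simp] lemma arensLeftL_apply (m n : Bidual B) : arensLeftL m n = arens m n := rfl

lemma herB_eq (p : Bidual B) (hpp : arens p p = p) :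
    herB p = {b : B | arens (arens p (jj b)) p = jj b} := by
  ext b
  constructor
  · rintro ⟨m, hm⟩
    show arens (arens p (jj b)) p = jj b
    conv_lhs => rw [← hm]
    have h1 : arens p (arens (arens p m) p) = arens (arens p m) p := by
      rw [← arens_assoc p (arens p m) p, ← arens_assoc p p m, hpp]
    rw [h1, arens_assoc, hpp]
    exact hm
  · intro h; exact ⟨jj b, h⟩

lemma p_unit_left (p : Bidual B) (hpp : arens p p = p) {b : B} (hb : b ∈ herB p) :
    arens p (jj b) = jj b := by
  rw [herB_eq p hpp] at hb
  calc arens p (jj b) = arens p (arens (arens p (jj b)) p) := by rw [hb]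
    _ = arens (arens p (arens p (jj b))) p := (arens_assoc _ _ _).symm
    _ = arens (arens (arens p p) (jj b)) p := by rw [arens_assoc p p (jj b)]
    _ = arens (arens p (jj b)) p := by rw [hpp]
    _ = jj b := hb

lemma p_unit_right (p : Bidual B) (hpp : arens p p = p) {b : B} (hb : b ∈ herB p) :
    arens (jj b) p = jj b := by
  rw [herB_eq p hpp] at hb
  calc arens (jj b) p = arens (arens (arens p (jj b)) p) p := by rw [hb]
    _ = arens (arens p (jj b)) (arens p p) := arens_assoc _ _ _
    _ = arens (arens p (jj b)) p := by rw [hpp]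
    _ = jj b := hb

lemma herB_mul (p : Bidual B) (hpp : arens p p = p) {b₁ b₂ : B}
    (h₁ : b₁ ∈ herB p) (h₂ : b₂ ∈ herB p) : b₁ * b₂ ∈ herB p := by
  rw [herB_eq p hpp]
  show arens (arens p (jj (b₁ * b₂))) p = jj (b₁ * b₂)
  rw [← jj_mul, ← arens_assoc p (jj b₁) (jj b₂), p_unit_left p hpp h₁,
    arens_assoc (jj b₁) (jj b₂) p, p_unit_right p hpp h₂]

lemma herB_zero (p : Bidual B) : (0 : B) ∈ herB p :=
  ⟨0, by rw [arens_zero_right, arens_zero_left, map_zero]⟩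

lemma herB_add (p : Bidual B) {b₁ b₂ : B} (h₁ : b₁ ∈ herB p) (h₂ : b₂ ∈ herB p) :
    b₁ + b₂ ∈ herB p := by
  obtain ⟨m₁, hm₁⟩ := h₁; obtain ⟨m₂, hm₂⟩ := h₂
  exact ⟨m₁ + m₂, by rw [arens_add_right, arens_add_left, hm₁, hm₂, map_add]⟩

lemma herB_smul (p : Bidual B) (c : ℂ) {b : B} (h : b ∈ herB p) : c • b ∈ herB p := by
  obtain ⟨m, hm⟩ := h
  exact ⟨c • m, by rw [arens_smul_right, arens_smul_left, hm, ContinuousLinearMap.map_smul]⟩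

lemma isClosed_herB (p : Bidual B) (hpp : arens p p = p) : IsClosed (herB p) := by
  rw [herB_eq p hpp]
  have hcont : Continuous fun b : B => arens (arens p (jj b)) p :=
    (arensRightL p).continuous.comp ((arensLeftL p).continuous.comp (jj (B := B)).continuous)
  exact isClosed_eq hcont (jj (B := B)).continuous

lemma goldstine (Dm : Submodule ℂ B) (p : Bidual B) (hp : p ∈ biann (Dm : Set B))
    (G : Finset (Dl B)) {ε : ℝ} (hε : 0 < ε) :
    ∃ d ∈ Dm, ‖d‖ ≤ ‖p‖ + 1 ∧ ∀ f ∈ G, ‖f d - p f‖ < ε := by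
  classical
  by_contra hcon
  push_neg at hcon
  set r : ℝ := ‖p‖ + 1 with hr
  have hr0 : 0 < r := by positivity
  set vl : B →ₗ[ℂ] ({f // f ∈ G} → ℂ) :=
    { toFun := fun d i => i.1 d
      map_add' := fun a b => by funext i; simp
      map_smul' := fun c a => by funext i; simp } with hvl
  set S : Set B := (Dm : Set B) ∩ Metric.closedBall 0 r with hSdef
  have hScv : Convex ℝ S :=
    ((Dm.restrictScalars ℝ).convex).inter (convex_closedBall 0 r)
  set V : Set ({f // f ∈ G} → ℂ) := vl '' S with hVdef
  have hVcv : Convex ℝ V := hScv.linear_image (vl.restrictScalars ℝ)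
  set pt : {f // f ∈ G} → ℂ := fun i => p i.1 with hptdef
  have hpt : pt ∉ closure V := by
    intro hmem
    rw [Metric.mem_closure_iff] at hmem
    obtain ⟨y, ⟨d, ⟨hdD, hdball⟩, rfl⟩, hdist⟩ := hmem ε hε
    obtain ⟨f, hfG, hf⟩ := hcon d hdD (mem_closedBall_zero_iff.mp hdball)
    have h1 : ‖pt - vl d‖ < ε := by rw [← dist_eq_norm]; exact hdist
    have h2 : ‖(pt - vl d) ⟨f, hfG⟩‖ ≤ ‖pt - vl d‖ := norm_le_pi_norm _ _
    have h3 : (pt - vl d) ⟨f, hfG⟩ = p f - f d := rfl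
    rw [h3] at h2
    rw [norm_sub_rev] at h2
    linarith
  obtain ⟨φ, u, hu1, hu2⟩ := RCLike.geometric_hahn_banach_closed_point (𝕜 := ℂ)
    hVcv.closure isClosed_closure hpt
  set g : Dl B := ∑ i : {f // f ∈ G}, φ ((Pi.single i 1 : {f // f ∈ G} → ℂ)) • i.1 with hg
  have hsingle : ∀ (i : {f // f ∈ G}) (c : ℂ),
      (Pi.single i c : {f // f ∈ G} → ℂ) = c • (Pi.single i 1 : {f // f ∈ G} → ℂ) := by
    intro i c
    rw [← Pi.single_smul, smul_eq_mul, mul_one]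
  have hgd : ∀ d : B, g d = φ (vl d) := by
    intro d
    calc g d = ∑ i : {f // f ∈ G}, φ ((Pi.single i 1 : {f // f ∈ G} → ℂ)) * i.1 d := by
          rw [hg]; simp [ContinuousLinearMap.sum_apply, ContinuousLinearMap.smul_apply,
            smul_eq_mul]
      _ = ∑ i : {f // f ∈ G}, φ ((Pi.single i (i.1 d) : {f // f ∈ G} → ℂ)) := by
          refine Finset.sum_congr rfl fun i _ => ?_
          rw [hsingle i (i.1 d), map_smul, smul_eq_mul, mul_comm]
      _ = φ (∑ i : {f // f ∈ G}, (Pi.single i (i.1 d) : {f // f ∈ G} → ℂ)) :=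
          (map_sum φ _ _).symm
      _ = φ (vl d) := congrArg φ (Finset.univ_sum_single (vl d))
  have hgp : p g = φ pt := by
    calc p g = ∑ i : {f // f ∈ G}, p (φ (Pi.single i 1) • (i.1 : Dl B)) := by
          rw [hg, map_sum]
      _ = ∑ i : {f // f ∈ G}, φ ((Pi.single i (p i.1) : {f // f ∈ G} → ℂ)) := by
          refine Finset.sum_congr rfl fun i _ => ?_
          rw [ContinuousLinearMap.map_smul, smul_eq_mul,
            hsingle i (p i.1), map_smul, smul_eq_mul, mul_comm]
      _ = φ (∑ i : {f // f ∈ G}, (Pi.single i (p i.1) : {f // f ∈ G} → ℂ)) :=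
          (map_sum φ _ _).symm
      _ = φ pt := congrArg φ (Finset.univ_sum_single pt)
  have h0V : (0 : {f // f ∈ G} → ℂ) ∈ V :=
    ⟨0, ⟨Dm.zero_mem, by simpa [mem_closedBall_zero_iff] using hr0.le⟩, map_zero vl⟩
  have hu0 : 0 < u := by
    have := hu1 0 (subset_closure h0V)
    simpa using this
  have hA : ∀ d ∈ Dm, ‖d‖ ≤ r → ‖g d‖ ≤ u := by
    intro d hd hdr
    rcases eq_or_ne (g d) 0 with h | h
    · rw [h, norm_zero]; exact hu0.le
    set c : ℂ := (‖g d‖ : ℂ) / g d with hc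
    have hgdn : (0:ℝ) < ‖g d‖ := norm_pos_iff.mpr h
    have hcnorm : ‖c‖ = 1 := by
      rw [hc, norm_div, Complex.norm_real, Real.norm_of_nonneg (norm_nonneg _),
        div_self hgdn.ne']
    have hcd : c • d ∈ Dm := Dm.smul_mem c hd
    have hnorm : ‖c • d‖ ≤ r := by rw [norm_smul, hcnorm, one_mul]; exact hdr
    have hmem : vl (c • d) ∈ V :=
      ⟨c • d, ⟨hcd, mem_closedBall_zero_iff.mpr hnorm⟩, rfl⟩
    have hlt := hu1 _ (subset_closure hmem)
    rw [← hgd] at hlt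
    have hgc : g (c • d) = (‖g d‖ : ℂ) := by
      rw [map_smul, smul_eq_mul, hc, div_mul_cancel₀ _ h]
    rw [hgc] at hlt
    simp only [RCLike.re_to_complex, Complex.ofReal_re] at hlt
    exact hlt.le
  set Dg : Dm →L[ℂ] ℂ := g.comp Dm.subtypeL with hDg
  have hDgnorm : ‖Dg‖ ≤ u / r := by
    refine ContinuousLinearMap.opNorm_le_bound _ (by positivity) fun x => ?_
    rcases eq_or_ne (x : B) 0 with hx | hx
    · have h1 : Dg x = 0 := by
        show g (x : B) = 0
        rw [hx, map_zero]
      have h2 : ‖x‖ = ‖(x : B)‖ := rfl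
      rw [h1, norm_zero, h2, hx, norm_zero, mul_zero]
    · have hxn : (0:ℝ) < ‖(x : B)‖ := norm_pos_iff.mpr hx
      set d' : B := ((r / ‖(x : B)‖ : ℝ) : ℂ) • (x : B) with hd'
      have hd'mem : d' ∈ Dm := Dm.smul_mem _ x.2
      have hd'norm : ‖d'‖ ≤ r := by
        rw [hd', norm_smul, Complex.norm_real,
          Real.norm_of_nonneg (by positivity), div_mul_cancel₀ _ hxn.ne']
      have hgd' := hA d' hd'mem hd'norm
      rw [hd', map_smul, norm_smul, Complex.norm_real,
        Real.norm_of_nonneg (by positivity)] at hgd'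
      have h4 : r * ‖g (x : B)‖ ≤ u * ‖(x : B)‖ := by
        rw [div_mul_eq_mul_div] at hgd'
        exact (div_le_iff₀ hxn).mp hgd'
      have h3 : ‖Dg x‖ = ‖g (x : B)‖ := rfl
      have h2 : ‖x‖ = ‖(x : B)‖ := rfl
      rw [h3, h2, div_mul_eq_mul_div, le_div_iff₀ hr0]
      linarith
  obtain ⟨g₂, hext, hg₂norm⟩ := exists_extension_norm_eq (𝕜 := ℂ) Dm Dg
  have hann : g - g₂ ∈ ann (Dm : Set B) := by
    intro a ha
    have h1 := hext ⟨a, ha⟩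
    have h2 : Dg ⟨a, ha⟩ = g a := rfl
    rw [h2] at h1
    show g a - g₂ a = 0
    rw [h1, sub_self]
  have hpgg : p g = p g₂ := by
    have h0 := hp (g - g₂) hann
    rw [map_sub] at h0
    exact sub_eq_zero.mp h0
  have h5 : u < ‖p g‖ := by
    have h6 : u < RCLike.re (p g) := by rw [hgp]; exact hu2
    exact lt_of_lt_of_le h6 (RCLike.re_le_norm _)
  have h6 : ‖p g‖ ≤ ‖p‖ * (u / r) := by
    rw [hpgg]
    calc ‖p g₂‖ ≤ ‖p‖ * ‖g₂‖ := p.le_opNorm g₂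
      _ ≤ ‖p‖ * (u / r) := by
          rw [hg₂norm]
          exact mul_le_mul_of_nonneg_left hDgnorm (norm_nonneg p)
  have h7 : ‖p‖ * (u / r) < u := by
    have h8 : ‖p‖ < r := by rw [hr]; linarith
    have h9 : (0:ℝ) < u / r := div_pos hu0 hr0
    calc ‖p‖ * (u / r) < r * (u / r) := by
          exact mul_lt_mul_of_pos_right h8 h9
      _ = u := by field_simp
  linarith

set_option maxHeartbeats 1000000 in
lemma key_ai (Dm : Submodule ℂ B) (p : Bidual B) (hpp : arens p p = p)
    (hp : p ∈ biann (Dm : Set B)) (s : Finset B) (hs : ∀ x ∈ s, x ∈ herB p)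
    {ε : ℝ} (hε : 0 < ε) :
    ∃ d ∈ Dm, ∀ x ∈ s, ‖d * x - x‖ < ε ∧ ‖x * d - x‖ < ε := by
  classical
  by_contra hcon
  push_neg at hcon
  set r : ℝ := ‖p‖ + 1 with hr
  have hr0 : 0 < r := by positivity
  set Φ : B → ({x // x ∈ s} → B) × ({x // x ∈ s} → B) :=
    fun d => (fun x => d * x.1 - x.1, fun x => x.1 * d - x.1) with hΦ
  set S : Set B := (Dm : Set B) ∩ Metric.closedBall 0 r with hSdef
  set V : Set (({x // x ∈ s} → B) × ({x // x ∈ s} → B)) := Φ '' S with hVdef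
  have hmulL : ∀ (t : ℝ) (y z : B), (t • y) * z = t • (y * z) := fun t y z => by
    rw [← Complex.coe_smul, ← Complex.coe_smul, smul_mul_assoc]
  have hmulR : ∀ (t : ℝ) (y z : B), y * (t • z) = t • (y * z) := fun t y z => by
    rw [← Complex.coe_smul, ← Complex.coe_smul, mul_smul_comm]
  have hVcv : Convex ℝ V := by
    rintro _ ⟨d₁, ⟨hd₁D, hd₁b⟩, rfl⟩ _ ⟨d₂, ⟨hd₂D, hd₂b⟩, rfl⟩ a b ha hb hab
    have hd₁r : ‖d₁‖ ≤ r := mem_closedBall_zero_iff.mp hd₁b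
    have hd₂r : ‖d₂‖ ≤ r := mem_closedBall_zero_iff.mp hd₂b
    have hmem1 : a • d₁ + b • d₂ ∈ Dm := by
      rw [← Complex.coe_smul, ← Complex.coe_smul]
      exact Dm.add_mem (Dm.smul_mem _ hd₁D) (Dm.smul_mem _ hd₂D)
    have hmem2 : ‖a • d₁ + b • d₂‖ ≤ r :=
      calc ‖a • d₁ + b • d₂‖ ≤ ‖a • d₁‖ + ‖b • d₂‖ := norm_add_le _ _
        _ = a * ‖d₁‖ + b * ‖d₂‖ := by
            rw [norm_smul, norm_smul, Real.norm_of_nonneg ha, Real.norm_of_nonneg hb]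
        _ ≤ a * r + b * r := by
            apply add_le_add
            · exact mul_le_mul_of_nonneg_left hd₁r ha
            · exact mul_le_mul_of_nonneg_left hd₂r hb
        _ = r := by rw [← add_mul, hab, one_mul]
    refine ⟨a • d₁ + b • d₂, ⟨hmem1, mem_closedBall_zero_iff.mpr hmem2⟩, ?_⟩
    have habx : ∀ x : B, a • x + b • x = x := fun x => by
      rw [← add_smul, hab, one_smul]
    apply Prod.ext
    · funext x
      show (a • d₁ + b • d₂) * x.1 - x.1
          = a • (d₁ * x.1 - x.1) + b • (d₂ * x.1 - x.1)
      rw [add_mul, hmulL, hmulL, smul_sub, smul_sub, sub_add_sub_comm, habx x.1]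
    · funext x
      show x.1 * (a • d₁ + b • d₂) - x.1
          = a • (x.1 * d₁ - x.1) + b • (x.1 * d₂ - x.1)
      rw [mul_add, hmulR, hmulR, smul_sub, smul_sub, sub_add_sub_comm, habx x.1]
  have h0cl : (0 : ({x // x ∈ s} → B) × ({x // x ∈ s} → B)) ∉ closure V := by
    intro hmem
    rw [Metric.mem_closure_iff] at hmem
    obtain ⟨y, ⟨d, ⟨hdD, _⟩, rfl⟩, hdist⟩ := hmem ε hε
    obtain ⟨x, hxs, hx⟩ := hcon d hdD
    have hbig : ε ≤ ‖Φ d‖ := by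
      by_cases hcase : ‖d * x - x‖ < ε
      · calc ε ≤ ‖x * d - x‖ := hx hcase
          _ = ‖(Φ d).2 ⟨x, hxs⟩‖ := rfl
          _ ≤ ‖(Φ d).2‖ := norm_le_pi_norm _ _
          _ ≤ ‖Φ d‖ := norm_snd_le _
      · push_neg at hcase
        calc ε ≤ ‖d * x - x‖ := hcase
          _ = ‖(Φ d).1 ⟨x, hxs⟩‖ := rfl
          _ ≤ ‖(Φ d).1‖ := norm_le_pi_norm _ _
          _ ≤ ‖Φ d‖ := norm_fst_le _
    rw [dist_comm, dist_zero_right] at hdist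
    linarith
  obtain ⟨φ, u, hu1, hu2⟩ := RCLike.geometric_hahn_banach_closed_point (𝕜 := ℂ)
    hVcv.closure isClosed_closure h0cl
  have hu0 : u < 0 := by simpa using hu2
  set n : ℕ := s.card with hn
  set ε₂ : ℝ := -u / (2 * n + 1) with hε₂
  have hε₂0 : 0 < ε₂ := by
    apply div_pos (by linarith)
    positivity
  set sgl : {x // x ∈ s} → (B →L[ℂ] ({x // x ∈ s} → B)) := fun x =>
    LinearMap.mkContinuous (LinearMap.single ℂ (fun _ : {x // x ∈ s} => B) x) 1
      (fun b => by
        rw [one_mul]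
        show ‖(Pi.single x b : {x // x ∈ s} → B)‖ ≤ ‖b‖
        exact (Pi.norm_single (G := fun _ : {x // x ∈ s} => B) b).le) with hsgl
  set gx : {x // x ∈ s} → Dl B := fun x =>
    φ.comp ((ContinuousLinearMap.inl ℂ _ _).comp (sgl x)) with hgx
  set hxf : {x // x ∈ s} → Dl B := fun x =>
    φ.comp ((ContinuousLinearMap.inr ℂ _ _).comp (sgl x)) with hhxf
  have hdec : ∀ z : ({x // x ∈ s} → B) × ({x // x ∈ s} → B),
      φ z = (∑ x : {x // x ∈ s}, gx x (z.1 x)) + ∑ x : {x // x ∈ s}, hxf x (z.2 x) := by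
    intro z
    have hz : φ z = φ ((z.1, (0 : {x // x ∈ s} → B)) : _ × _)
        + φ (((0 : {x // x ∈ s} → B), z.2) : _ × _) := by
      rw [← map_add]
      congr 1
      apply Prod.ext <;> simp
    rw [hz]
    congr 1
    · have e0 : φ ((z.1, (0 : {x // x ∈ s} → B)) : _ × _)
          = (φ.comp (ContinuousLinearMap.inl ℂ ({x // x ∈ s} → B) ({x // x ∈ s} → B))) z.1 :=
        rfl
      rw [e0]
      conv_lhs => rw [← Finset.univ_sum_single z.1]
      rw [map_sum]
      exact Finset.sum_congr rfl fun x _ => rfl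
    · have e0 : φ (((0 : {x // x ∈ s} → B), z.2) : _ × _)
          = (φ.comp (ContinuousLinearMap.inr ℂ ({x // x ∈ s} → B) ({x // x ∈ s} → B))) z.2 :=
        rfl
      rw [e0]
      conv_lhs => rw [← Finset.univ_sum_single z.2]
      rw [map_sum]
      exact Finset.sum_congr rfl fun x _ => rfl
  set G : Finset (Dl B) :=
    (Finset.univ.image fun x : {x // x ∈ s} => nF (jj x.1) (gx x)) ∪
      (Finset.univ.image fun x : {x // x ∈ s} => fA (hxf x) x.1) with hG
  obtain ⟨d, hdD, hdr, hdapp⟩ := goldstine Dm p hp G hε₂0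
  have hterm1 : ∀ x : {x // x ∈ s}, ‖gx x (d * x.1 - x.1)‖ < ε₂ := by
    intro x
    have hf : nF (jj x.1) (gx x) ∈ G :=
      Finset.mem_union_left _ (Finset.mem_image_of_mem _ (Finset.mem_univ x))
    have h1 := hdapp _ hf
    have e1 : nF (jj x.1) (gx x) d = gx x (d * x.1) := rfl
    have e2 : p (nF (jj x.1) (gx x)) = gx x x.1 := by
      have h3 : p (nF (jj x.1) (gx x)) = arens p (jj x.1) (gx x) := rfl
      rw [h3, p_unit_left p hpp (hs x.1 x.2)]
      exact jj_apply x.1 (gx x)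
    rw [e1, e2] at h1
    calc ‖gx x (d * x.1 - x.1)‖ = ‖gx x (d * x.1) - gx x x.1‖ := by rw [map_sub]
      _ < ε₂ := h1
  have hterm2 : ∀ x : {x // x ∈ s}, ‖hxf x (x.1 * d - x.1)‖ < ε₂ := by
    intro x
    have hf : fA (hxf x) x.1 ∈ G :=
      Finset.mem_union_right _ (Finset.mem_image_of_mem _ (Finset.mem_univ x))
    have h1 := hdapp _ hf
    have e1 : fA (hxf x) x.1 d = hxf x (x.1 * d) := rfl
    have e2 : p (fA (hxf x) x.1) = hxf x x.1 := by
      have h3 : p (fA (hxf x) x.1) = arens (jj x.1) p (hxf x) := rfl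
      rw [h3, p_unit_right p hpp (hs x.1 x.2)]
      exact jj_apply x.1 (hxf x)
    rw [e1, e2] at h1
    calc ‖hxf x (x.1 * d - x.1)‖ = ‖hxf x (x.1 * d) - hxf x x.1‖ := by rw [map_sub]
      _ < ε₂ := h1
  have hΦdV : Φ d ∈ closure V :=
    subset_closure ⟨d, ⟨hdD, mem_closedBall_zero_iff.mpr hdr⟩, rfl⟩
  have hlt := hu1 _ hΦdV
  have hbound : ‖φ (Φ d)‖ ≤ 2 * n * ε₂ := by
    rw [hdec (Φ d)]
    calc ‖(∑ x : {x // x ∈ s}, gx x ((Φ d).1 x)) + ∑ x : {x // x ∈ s}, hxf x ((Φ d).2 x)‖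
        ≤ ‖∑ x : {x // x ∈ s}, gx x ((Φ d).1 x)‖
          + ‖∑ x : {x // x ∈ s}, hxf x ((Φ d).2 x)‖ := norm_add_le _ _
      _ ≤ (∑ x : {x // x ∈ s}, ‖gx x ((Φ d).1 x)‖)
          + ∑ x : {x // x ∈ s}, ‖hxf x ((Φ d).2 x)‖ :=
          add_le_add (norm_sum_le _ _) (norm_sum_le _ _)
      _ ≤ (∑ _x : {x // x ∈ s}, ε₂) + ∑ _x : {x // x ∈ s}, ε₂ := by
          apply add_le_add
          · exact Finset.sum_le_sum fun x _ => (hterm1 x).le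
          · exact Finset.sum_le_sum fun x _ => (hterm2 x).le
      _ = 2 * n * ε₂ := by
          simp only [Finset.sum_const, Finset.card_univ, Fintype.card_coe, nsmul_eq_mul]
          push_cast
          ring
  have h2n : 2 * (n : ℝ) * ε₂ < -u := by
    rw [hε₂]
    have hpos : (0:ℝ) < 2 * n + 1 := by positivity
    have hneg : (0:ℝ) < -u := by linarith
    have hfrac : 2 * (n:ℝ) / (2 * n + 1) < 1 := by
      rw [div_lt_one hpos]; linarith
    calc 2 * (n:ℝ) * (-u / (2 * n + 1)) = (-u) * (2 * n / (2 * n + 1)) := by ring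
      _ < (-u) * 1 := mul_lt_mul_of_pos_left hfrac hneg
      _ = -u := mul_one _
  have h3 : -(‖φ (Φ d)‖) ≤ RCLike.re (φ (Φ d)) := by
    have h4 := RCLike.abs_re_le_norm (φ (Φ d))
    have := (abs_le.mp h4).1
    linarith
  linarith

/-- If `p` is open in `A**`, then `M(C:D)` equals the closure of `D`
inside `M(C)` with respect to the strict topology `β_C`. -/
theorem open_implies_mult_eq_strict_closure
    (A : Subalgebra ℂ B) (hAclosed : IsClosed (A : Set B))
    (p : Bidual B) (hp : IsOpenP p)
    (C : Set B) (hC : C = herB p) (D : Set B) (hD : D = (A : Set B) ∩ C)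
    (hopen : IsOpenIn (A : Set B) p) :
    multRel C D = {x | x ∈ mult C ∧ inStrictClosure C (jset D) x} := by
  classical
  obtain ⟨⟨hpp, _hpstar⟩, hpbiann⟩ := hopen
  subst hD
  subst hC
  set Dm : Submodule ℂ B :=
    { carrier := (A : Set B) ∩ herB p
      add_mem' := fun ha hb => ⟨add_mem ha.1 hb.1, herB_add p ha.2 hb.2⟩
      zero_mem' := ⟨zero_mem A.toSubmodule, herB_zero p⟩
      smul_mem' := fun c {x} hx => ⟨A.smul_mem hx.1 c, herB_smul p c hx.2⟩ } with hDm
  have hDmcoe : (Dm : Set B) = (A : Set B) ∩ herB p := rfl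
  have hsub : herSub (A : Set B) p ⊆ (Dm : Set B) := by
    rintro a ⟨ha1, m, _hm1, hm2⟩
    exact ⟨ha1, ⟨m, hm2⟩⟩
  have hpD : p ∈ biann (Dm : Set B) := fun f hf =>
    hpbiann f (fun a ha => hf a (hsub ha))
  have hDclosed : IsClosed ((A : Set B) ∩ herB p) :=
    hAclosed.inter (isClosed_herB p hpp)
  have hDmul : ∀ a b : B, a ∈ (A : Set B) ∩ herB p → b ∈ (A : Set B) ∩ herB p →
      a * b ∈ (A : Set B) ∩ herB p := fun a b ha hb =>
    ⟨mul_mem ha.1 hb.1, herB_mul p hpp ha.2 hb.2⟩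
  ext x
  simp only [Set.mem_setOf_eq]
  constructor
  · rintro ⟨hxM, hxl, hxr⟩
    refine ⟨hxM, ?_⟩
    intro F hF ε hε
    set w : B → B := fun c => if h : c ∈ herB p then Classical.choose (hxM.2.2 c h) else 0
      with hw
    have hwspec : ∀ c (h : c ∈ herB p), w c ∈ herB p ∧ arens (jj c) x = jj (w c) := by
      intro c h
      have hcs := Classical.choose_spec (hxM.2.2 c h)
      obtain ⟨h1, h2⟩ := hcs
      constructor
      · show (if h' : c ∈ herB p then Classical.choose (hxM.2.2 c h') else 0) ∈ herB p
        rw [dif_pos h]; exact h1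
      · show arens (jj c) x = jj (if h' : c ∈ herB p then Classical.choose (hxM.2.2 c h') else 0)
        rw [dif_pos h]; exact h2
    set s : Finset B := F.image Prod.fst ∪ F.image (fun bc => w bc.2) with hsdef
    have hsC : ∀ y ∈ s, y ∈ herB p := by
      intro y hy
      rcases Finset.mem_union.mp hy with h | h
      · obtain ⟨bc, hbc, rfl⟩ := Finset.mem_image.mp h
        exact (hF bc hbc).1
      · obtain ⟨bc, hbc, rfl⟩ := Finset.mem_image.mp h
        exact (hwspec bc.2 (hF bc hbc).2).1
    set ε' : ℝ := ε / (3 * (‖x‖ + 1)) with hε'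
    have hε'0 : 0 < ε' := by positivity
    obtain ⟨e, heD, he⟩ := key_ai Dm p hpp hpD s hsC hε'0
    obtain ⟨d, hdD, hdeq⟩ := hxl e heD
    refine ⟨jj d, ⟨d, hdD, rfl⟩, ?_⟩
    rintro ⟨b, c⟩ hbc
    have hbC : b ∈ herB p := (hF _ hbc).1
    have hcC : c ∈ herB p := (hF _ hbc).2
    obtain ⟨hwC, hweq⟩ := hwspec c hcC
    have hbs : b ∈ s := Finset.mem_union_left _
      (Finset.mem_image.mpr ⟨(b, c), hbc, rfl⟩)
    have hws : w c ∈ s := Finset.mem_union_right _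
      (Finset.mem_image.mpr ⟨(b, c), hbc, rfl⟩)
    have he_b := (he b hbs).1
    have he_w := (he (w c) hws).2
    have t1 : arens (x - jj d) (jj b) = arens x (jj (b - e * b)) := by
      calc arens (x - jj d) (jj b) = arens x (jj b) - arens (jj d) (jj b) :=
            arens_sub_left _ _ _
        _ = arens x (jj b) - arens (arens x (jj e)) (jj b) := by rw [hdeq]
        _ = arens x (jj b) - arens x (arens (jj e) (jj b)) := by rw [arens_assoc]
        _ = arens x (jj b) - arens x (jj (e * b)) := by rw [jj_mul]
        _ = arens x (jj b - jj (e * b)) := (arens_sub_right _ _ _).symm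
        _ = arens x (jj (b - e * b)) := congrArg (arens x) (map_sub jj _ _).symm
    have t2 : arens (jj c) (x - jj d) = jj (w c - w c * e) := by
      calc arens (jj c) (x - jj d) = arens (jj c) x - arens (jj c) (jj d) :=
            arens_sub_right _ _ _
        _ = arens (jj c) x - arens (jj c) (arens x (jj e)) := by rw [hdeq]
        _ = arens (jj c) x - arens (arens (jj c) x) (jj e) := by rw [arens_assoc]
        _ = jj (w c) - arens (jj (w c)) (jj e) := by rw [hweq]
        _ = jj (w c) - jj (w c * e) := by rw [jj_mul]
        _ = jj (w c - w c * e) := (map_sub jj _ _).symm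
    have n1 : ‖arens (x - jj d) (jj b)‖ ≤ ‖x‖ * ε' := by
      rw [t1]
      calc ‖arens x (jj (b - e * b))‖ ≤ ‖x‖ * ‖jj (b - e * b)‖ := arens_norm_le _ _
        _ = ‖x‖ * ‖b - e * b‖ := by rw [norm_jj]
        _ ≤ ‖x‖ * ε' := by
            apply mul_le_mul_of_nonneg_left _ (norm_nonneg x)
            rw [norm_sub_rev]
            exact he_b.le
    have n2 : ‖arens (jj c) (x - jj d)‖ ≤ ε' := by
      rw [t2, norm_jj, norm_sub_rev]
      exact he_w.le
    calc ‖arens (x - jj d) (jj b)‖ + ‖arens (jj c) (x - jj d)‖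
        ≤ ‖x‖ * ε' + ε' := add_le_add n1 n2
      _ = (‖x‖ + 1) * ε' := by ring
      _ = ε / 3 := by
          rw [hε']
          field_simp
      _ < ε := by linarith
  · rintro ⟨hxM, hstrict⟩
    refine ⟨hxM, ?_, ?_⟩
    · intro d hd
      obtain ⟨xd, hxdC, hxdeq⟩ := hxM.2.1 d hd.2
      refine ⟨xd, ?_, hxdeq⟩
      have hclosure : xd ∈ closure ((A : Set B) ∩ herB p) := by
        rw [Metric.mem_closure_iff]
        intro δ hδ
        obtain ⟨selt, hseltD, hsprop⟩ := hstrict {(d, d)}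
          (by intro bc hbc
              rw [Finset.mem_singleton] at hbc
              subst hbc
              exact ⟨hd.2, hd.2⟩) δ hδ
        obtain ⟨d', hd'D, rfl⟩ := hseltD
        have h := hsprop (d, d) (Finset.mem_singleton_self _)
        have h1 : ‖arens (x - jj d') (jj d)‖ < δ := by
          have h2 := norm_nonneg (arens (jj d) (x - jj d'))
          linarith
        have heq : arens (x - jj d') (jj d) = jj (xd - d' * d) := by
          calc arens (x - jj d') (jj d) = arens x (jj d) - arens (jj d') (jj d) :=
                arens_sub_left _ _ _
            _ = jj xd - jj (d' * d) := by rw [hxdeq, jj_mul]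
            _ = jj (xd - d' * d) := (map_sub jj _ _).symm
        refine ⟨d' * d, hDmul d' d hd'D hd, ?_⟩
        rw [dist_eq_norm]
        calc ‖xd - d' * d‖ = ‖jj (xd - d' * d)‖ := (norm_jj _).symm
          _ = ‖arens (x - jj d') (jj d)‖ := by rw [heq]
          _ < δ := h1
      rw [hDclosed.closure_eq] at hclosure
      exact ⟨hclosure.1, hxdC⟩
    · intro d hd
      obtain ⟨dx, hdxC, hdxeq⟩ := hxM.2.2 d hd.2
      refine ⟨dx, ?_, hdxeq⟩
      have hclosure : dx ∈ closure ((A : Set B) ∩ herB p) := by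
        rw [Metric.mem_closure_iff]
        intro δ hδ
        obtain ⟨selt, hseltD, hsprop⟩ := hstrict {(d, d)}
          (by intro bc hbc
              rw [Finset.mem_singleton] at hbc
              subst hbc
              exact ⟨hd.2, hd.2⟩) δ hδ
        obtain ⟨d', hd'D, rfl⟩ := hseltD
        have h := hsprop (d, d) (Finset.mem_singleton_self _)
        have h1 : ‖arens (jj d) (x - jj d')‖ < δ := by
          have h2 := norm_nonneg (arens (x - jj d') (jj d))
          linarith
        have heq : arens (jj d) (x - jj d') = jj (dx - d * d') := by
          calc arens (jj d) (x - jj d') = arens (jj d) x - arens (jj d) (jj d') :=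
                arens_sub_right _ _ _
            _ = jj dx - jj (d * d') := by rw [hdxeq, jj_mul]
            _ = jj (dx - d * d') := (map_sub jj _ _).symm
        refine ⟨d * d', hDmul d d' hd hd'D, ?_⟩
        rw [dist_eq_norm]
        calc ‖dx - d * d'‖ = ‖jj (dx - d * d')‖ := (norm_jj _).symm
          _ = ‖arens (jj d) (x - jj d')‖ := by rw [heq]
          _ < δ := h1
      rw [hDclosed.closure_eq] at hclosure
      exact ⟨hclosure.1, hdxC⟩

end Statements

end OAPaper
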